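/- Let R be a noetherian integrally closed domain with fraction field K and P its set of height-one primes. For any R-lattice M in W = K^n, the double dual M^** equals ∩_{𝔭∈P} M_𝔭; consequently M^** is reflexive, and M is reflexive if and only if M = ∩_{𝔭∈P} M_𝔭. -/

import Mathlib

section

variable {R K : Type} [CommRing R] [IsDomain R] [Field K] [Algebra R K] [IsFractionRing R K]
  (n : ℕ)

/-- The set of height-one primes of `R` (minimal nonzero primes). -/
def HtOnePrime (R : Type) [CommRing R] : Type :=
  {p : Ideal R // p.IsPrime ∧ p ≠ ⊥ ∧ ∀ q : Ideal R, q.IsPrime → q < p → q = ⊥}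

/-- The localization `R_𝔭 · M ⊆ W` of a subset `M` of `W = K^n`. -/
def LocAt (p : HtOnePrime R) (M : Set (Fin n → K)) : Set (Fin n → K) :=
  {x | ∃ s : R, s ∉ p.1 ∧ s • x ∈ M}

/-- An `R`-lattice in `W = K^n`. -/
def IsLattice (M : Submodule R (Fin n → K)) : Prop :=
  M.FG ∧ Submodule.span K (M : Set (Fin n → K)) = ⊤

/-- The dual lattice `M^* ⊆ W^*`: the linear functionals taking `M` into `R`. -/
def DualLat (M : Set (Fin n → K)) : Set ((Fin n → K) →ₗ[K] K) :=
  {f | ∀ x ∈ M, ∃ r : R, f x = algebraMap R K r}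

/-- The double dual `M^{**}`, identified with a lattice in `W` via `W ≅ W^{**}`. -/
def DDual (M : Set (Fin n → K)) : Set (Fin n → K) :=
  {x | ∀ f ∈ DualLat (R := R) n M, ∃ r : R, f x = algebraMap R K r}

end


set_option linter.unusedSectionVars false
set_option linter.unusedVariables false
set_option maxHeartbeats 1000000
set_option synthInstance.maxHeartbeats 400000

section Aux

variable {R K : Type} [CommRing R] [IsDomain R] [Field K] [Algebra R K] [IsFractionRing R K]

lemma mem_loc_subalg_iff (p : Ideal R) [p.IsPrime] (A : Subalgebra R K)
    [IsLocalization.AtPrime A p] (k : K) :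
    k ∈ A ↔ ∃ s : R, s ∉ p ∧ ∃ r : R, algebraMap R K s * k = algebraMap R K r := by
  constructor
  · intro hk
    obtain ⟨⟨r, s⟩, h⟩ := IsLocalization.surj p.primeCompl (⟨k, hk⟩ : A)
    refine ⟨s, s.2, r, ?_⟩
    have := congrArg (algebraMap A K) h
    simp only [map_mul, ← IsScalarTower.algebraMap_apply R A K] at this
    rw [mul_comm]
    exact this
  · rintro ⟨s, hs, r, hr⟩
    have hs0 : algebraMap R K s ≠ 0 := by
      simp only [ne_eq, map_eq_zero_iff _ (IsFractionRing.injective R K)]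
      rintro rfl; exact hs p.zero_mem
    have := IsLocalization.mk'_spec A r (⟨s, hs⟩ : p.primeCompl)
    have h2 := congrArg (algebraMap A K) this
    simp only [map_mul, ← IsScalarTower.algebraMap_apply R A K] at h2
    have : k = algebraMap A K (IsLocalization.mk' A r (⟨s, hs⟩ : p.primeCompl)) := by
      have h3 := h2.trans hr.symm
      rw [mul_comm] at h3
      exact (mul_left_cancel₀ hs0 h3).symm
    rw [this]
    exact (IsLocalization.mk' A r (⟨s, hs⟩ : p.primeCompl)).2

lemma ht_one_of_colon [IsNoetherianRing R] [IsIntegrallyClosed R]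
    (y z : R) (hy : y ≠ 0) (hz : z ∉ Ideal.span {y})
    (p : Ideal R) [hp : p.IsPrime] (hmem : ∀ r : R, r ∈ p ↔ r * z ∈ Ideal.span {y})
    (A : Subalgebra R K) [IsLocalization.AtPrime A p] :
    ∀ q : Ideal R, q.IsPrime → q < p → q = ⊥ := by
  haveI : IsNoetherianRing A := IsLocalization.isNoetherianRing p.primeCompl A ‹_›
  haveI : IsLocalRing A := IsLocalization.AtPrime.isLocalRing A p
  haveI : IsIntegrallyClosed A :=
    isIntegrallyClosed_of_isLocalization A p.primeCompl p.primeCompl_le_nonZeroDivisors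
  haveI : IsFractionRing A K :=
    IsFractionRing.isFractionRing_of_isDomain_of_isLocalization p.primeCompl A K
  have hinj : Function.Injective (algebraMap R K) := IsFractionRing.injective R K
  have hyK : algebraMap R K y ≠ 0 := by
    simpa only [ne_eq, map_eq_zero_iff _ hinj] using hy
  set b : K := algebraMap R K z / algebraMap R K y with hb
  -- the maximal ideal is the image of p
  have hmmap : Ideal.map (algebraMap R A) p = IsLocalRing.maximalIdeal A := by
    conv_lhs => rw [← IsLocalization.AtPrime.comap_maximalIdeal A p]
    exact IsLocalization.map_comap p.primeCompl A _
  -- b multiplies the maximal ideal into A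
  have bsmul : ∀ v : A, v ∈ IsLocalRing.maximalIdeal A → b * (v : K) ∈ A := by
    intro v hv
    rw [← hmmap, Ideal.map] at hv
    induction hv using Submodule.span_induction with
    | mem w hw =>
      obtain ⟨r, hr, rfl⟩ := hw
      obtain ⟨c, hc⟩ := Ideal.mem_span_singleton'.mp ((hmem r).mp hr)
      have hcoe : ((algebraMap R A r : A) : K) = algebraMap R K r :=
        (IsScalarTower.algebraMap_apply R A K r).symm
      rw [hcoe]
      have : b * algebraMap R K r = algebraMap R K c := by
        rw [hb, div_mul_eq_mul_div, div_eq_iff hyK, ← map_mul, ← map_mul]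
        exact congrArg _ (by linear_combination -hc)
      rw [this]
      exact A.algebraMap_mem c
    | zero => simpa using A.zero_mem
    | add w₁ w₂ _ _ h1 h2 =>
      push_cast
      rw [mul_add]
      exact A.add_mem h1 h2
    | smul a w _ h1 =>
      rw [smul_eq_mul]
      push_cast
      rw [← mul_assoc, mul_comm b (a : K), mul_assoc]
      exact A.mul_mem a.2 h1
  by_cases hcase : ∀ v : A, ∀ hv : v ∈ IsLocalRing.maximalIdeal A,
      (⟨b * v, bsmul v hv⟩ : A) ∈ IsLocalRing.maximalIdeal A
  · -- integral case leads to contradiction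
    exfalso
    set N : Submodule A K := Submodule.map (Algebra.linearMap A K) (IsLocalRing.maximalIdeal A) with hN
    have hNfg : N.FG := (IsNoetherian.noetherian _).map _
    have hyp : y ∈ p := (hmem y).mpr (Ideal.mem_span_singleton'.mpr ⟨z, by ring⟩)
    have hyA : algebraMap R A y ∈ IsLocalRing.maximalIdeal A := by
      rw [← hmmap]; exact Ideal.mem_map_of_mem _ hyp
    have hNbot : N ≠ ⊥ := by
      intro h
      apply hyK
      have hmem' : (algebraMap R K y) ∈ N :=
        ⟨algebraMap R A y, hyA, (IsScalarTower.algebraMap_apply R A K y).symm⟩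
      rw [h] at hmem'; simpa using hmem'
    haveI : Module.IsTorsionFree A K :=
      Module.isTorsionFree_iff_algebraMap_injective.mpr (IsFractionRing.injective A K)
    have hint : IsIntegral A b := by
      refine isIntegral_of_smul_mem_submodule N hNbot hNfg b ?_
      rintro _ ⟨v, hv, rfl⟩
      refine ⟨⟨b * v, bsmul v hv⟩, hcase v hv, ?_⟩
      simp [Algebra.linearMap_apply, Algebra.smul_def]
    obtain ⟨a₀, ha₀⟩ := IsIntegrallyClosed.isIntegral_iff.mp hint
    have hbA : b ∈ A := by rw [← ha₀]; exact a₀.2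
    obtain ⟨s, hs, r, hr⟩ := (mem_loc_subalg_iff p A b).mp hbA
    apply hs
    refine (hmem s).mpr (Ideal.mem_span_singleton'.mpr ⟨r, ?_⟩)
    apply hinj
    rw [map_mul, map_mul]
    rw [hb, ← mul_div_assoc, div_eq_iff hyK] at hr
    linear_combination -hr
  · push_neg at hcase
    obtain ⟨v, hv, hw⟩ := hcase
    set w : A := ⟨b * v, bsmul v hv⟩ with hwdef
    have hwu : IsUnit w := by
      by_contra h
      exact hw ((IsLocalRing.mem_maximalIdeal w).mpr h)
    obtain ⟨u, hu⟩ := hwu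
    set t : A := ↑u⁻¹ * v with htdef
    have htm : t ∈ IsLocalRing.maximalIdeal A := Ideal.mul_mem_left _ _ hv
    have hw0 : (w : K) ≠ 0 := by
      intro h0
      have : w = 0 := Subtype.ext h0
      rw [this] at hu
      exact (hu ▸ u.isUnit).ne_zero rfl
    have hui : ((↑u⁻¹ : A) : K) = (w : K)⁻¹ := by
      have h1 : ((↑u * ↑u⁻¹ : A) : K) = 1 := by rw [u.mul_inv]; rfl
      push_cast at h1
      rw [hu] at h1
      field_simp [hw0] at h1 ⊢
      linear_combination h1
    have hspan : IsLocalRing.maximalIdeal A = Ideal.span {t} := by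
      apply le_antisymm
      · intro x hx
        set c : A := ⟨b * x, bsmul x hx⟩ with hcdef
        have hx' : x = c * t := by
          apply Subtype.ext
          show (x : K) = ((c * t : A) : K)
          push_cast [htdef, hcdef, hui]
          have hwK : (w : K) = b * (v : K) := rfl
          field_simp [hwK]
          ring
        exact Ideal.mem_span_singleton'.mpr ⟨c, hx'.symm⟩
      · rw [Ideal.span_le, Set.singleton_subset_iff]; exact htm
    intro q hq hlt
    have hdisj : Disjoint (p.primeCompl : Set R) (q : Set R) := by
      rw [Set.disjoint_left]; intro a ha hq'; exact ha (hlt.le hq')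
    have hQp : (Ideal.map (algebraMap R A) q).IsPrime :=
      IsLocalization.isPrime_of_isPrime_disjoint p.primeCompl A q hq hdisj
    set Q := Ideal.map (algebraMap R A) q with hQdef
    have hcomap : Q.comap (algebraMap R A) = q :=
      IsLocalization.under_map_of_isPrime_disjoint p.primeCompl A hq hdisj
    have hQm : Q ≤ IsLocalRing.maximalIdeal A := IsLocalRing.le_maximalIdeal hQp.ne_top
    have htQ : t ∉ Q := by
      intro ht
      have h1 : IsLocalRing.maximalIdeal A ≤ Q := by
        rw [hspan, Ideal.span_le, Set.singleton_subset_iff]; exact ht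
      have hQ : Q = IsLocalRing.maximalIdeal A := le_antisymm hQm h1
      refine hlt.ne ?_
      rw [← hcomap, hQ]; exact IsLocalization.AtPrime.comap_maximalIdeal A p
    have hpow : ∀ k : ℕ, Q ≤ Ideal.span {t} ^ k := by
      intro k; induction k with
      | zero => simp
      | succ k ih =>
        intro x hx
        rw [Ideal.span_singleton_pow] at ih ⊢
        obtain ⟨a, ha⟩ := Ideal.mem_span_singleton'.mp (ih hx)
        have haQ : a ∈ Q := by
          rcases hQp.mem_or_mem (show a * t ^ k ∈ Q by rw [ha]; exact hx) with h | h
          · exact h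
          · exact absurd (hQp.mem_of_pow_mem k h) htQ
        have haM : a ∈ Ideal.span {t} := by rw [← hspan]; exact hQm haQ
        obtain ⟨a', ha'⟩ := Ideal.mem_span_singleton'.mp haM
        exact Ideal.mem_span_singleton'.mpr ⟨a', by rw [← ha, ← ha', pow_succ]; ring⟩
    have hQbot : Q = ⊥ := by
      have hle : Q ≤ ⨅ k : ℕ, Ideal.span {t} ^ k := le_iInf hpow
      have hne : Ideal.span {t} ≠ (⊤ : Ideal A) := by
        rw [← hspan]; exact (IsLocalRing.maximalIdeal.isMaximal A).ne_top
      rwa [Ideal.iInf_pow_eq_bot_of_isDomain (I := Ideal.span {t}) hne, le_bot_iff] at hle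
    rw [← hcomap, hQbot]
    ext x
    simp only [Ideal.mem_comap, Ideal.mem_bot]
    exact ⟨fun h => IsLocalization.injective A p.primeCompl_le_nonZeroDivisors
      (by rw [h, map_zero]), fun h => by rw [h, map_zero]⟩

lemma mem_range_of_forall_htOne [IsNoetherianRing R] [IsIntegrallyClosed R] (a : K)
    (h : ∀ p : HtOnePrime R, ∃ s : R, s ∉ p.1 ∧ ∃ r : R, algebraMap R K s * a = algebraMap R K r) :
    ∃ r : R, a = algebraMap R K r := by
  have hinj : Function.Injective (algebraMap R K) := IsFractionRing.injective R K
  obtain ⟨x, y, hy, rfl⟩ := IsFractionRing.div_surjective (A := R) a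
  have hy0 : y ≠ 0 := nonZeroDivisors.ne_zero hy
  have hyK : algebraMap R K y ≠ 0 := by simpa only [ne_eq, map_eq_zero_iff _ hinj] using hy0
  by_cases hx : x ∈ Ideal.span {y}
  · obtain ⟨c, hc⟩ := Ideal.mem_span_singleton'.mp hx
    exact ⟨c, by rw [div_eq_iff hyK, ← map_mul]; exact congrArg _ hc.symm⟩
  · exfalso
    have hxq : (Ideal.Quotient.mk (Ideal.span {y}) x) ≠ 0 := by
      simpa [Ideal.Quotient.eq_zero_iff_mem] using hx
    obtain ⟨P, hP, hle⟩ := exists_le_isAssociatedPrime_of_isNoetherianRing R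
      (Ideal.Quotient.mk (Ideal.span {y}) x) hxq
    obtain ⟨hPprime, z', hz'⟩ := isAssociatedPrime_iff.mp hP
    obtain ⟨z, rfl⟩ := Ideal.Quotient.mk_surjective z'
    haveI := hPprime
    have hmem : ∀ r : R, r ∈ P ↔ r * z ∈ Ideal.span {y} := by
      intro r
      rw [hz', Submodule.mem_colon_singleton, Submodule.mem_bot,
        show r • (Ideal.Quotient.mk (Ideal.span {y})) z
          = (Ideal.Quotient.mk (Ideal.span {y})) (r * z) from rfl,
        Ideal.Quotient.eq_zero_iff_mem]
    have hz : z ∉ Ideal.span {y} := by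
      intro hzy
      exact hPprime.ne_top (Ideal.eq_top_iff_one _ |>.mpr ((hmem 1).mpr (by rwa [one_mul])))
    have hPbot : P ≠ ⊥ := by
      intro hb
      have : y ∈ P := (hmem y).mpr (Ideal.mem_span_singleton'.mpr ⟨z, by ring⟩)
      rw [hb] at this
      exact hy0 (by simpa using this)
    have hht := ht_one_of_colon (K := K) y z hy0 hz P hmem
      (Localization.subalgebra.ofField K P.primeCompl P.primeCompl_le_nonZeroDivisors)
    obtain ⟨s, hs, r, hr⟩ := h ⟨P, hPprime, hPbot, hht⟩
    apply hs
    have hsx : s * x ∈ Ideal.span {y} := by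
      refine Ideal.mem_span_singleton'.mpr ⟨r, ?_⟩
      apply hinj
      rw [map_mul, map_mul]
      rw [← mul_div_assoc, div_eq_iff hyK] at hr
      linear_combination -hr
    refine hle ?_
    rw [Submodule.mem_colon_singleton, Submodule.mem_bot,
      show s • (Ideal.Quotient.mk (Ideal.span {y})) x
        = (Ideal.Quotient.mk (Ideal.span {y})) (s * x) from rfl,
      Ideal.Quotient.eq_zero_iff_mem]
    exact hsx

lemma loc_isPID [IsNoetherianRing R] [IsIntegrallyClosed R] (p : Ideal R) [hp : p.IsPrime]
    (hmin : ∀ q : Ideal R, q.IsPrime → q < p → q = ⊥)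
    (A : Subalgebra R K) [IsLocalization.AtPrime A p] : IsPrincipalIdealRing A := by
  haveI : IsNoetherianRing A := IsLocalization.isNoetherianRing p.primeCompl A ‹_›
  haveI : IsLocalRing A := IsLocalization.AtPrime.isLocalRing A p
  haveI : IsIntegrallyClosed A :=
    isIntegrallyClosed_of_isLocalization A p.primeCompl p.primeCompl_le_nonZeroDivisors
  have htfae := (tfae_of_isNoetherianRing_of_isLocalRing_of_isDomain A).out 3 0
  refine htfae.mp ⟨inferInstance, ?_⟩
  intro P hPbot hPprime
  haveI := hPprime
  have hcp : (P.comap (algebraMap R A)).IsPrime := Ideal.IsPrime.comap _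
  have hle : P ≤ IsLocalRing.maximalIdeal A := IsLocalRing.le_maximalIdeal hPprime.ne_top
  have h1 : P.comap (algebraMap R A) ≤ p := by
    rw [← IsLocalization.AtPrime.comap_maximalIdeal A p]
    exact Ideal.comap_mono hle
  have h2 : P.comap (algebraMap R A) ≠ ⊥ := by
    intro hb
    apply hPbot
    rw [← IsLocalization.map_comap p.primeCompl A P, Ideal.under_def, hb, Ideal.map_bot]
  have h3 : P.comap (algebraMap R A) = p := by
    rcases lt_or_eq_of_le h1 with h | h
    · exact absurd (hmin _ hcp h) h2
    · exact h
  rw [← IsLocalization.map_comap p.primeCompl A P, Ideal.under_def, h3]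
  conv_lhs => rw [← IsLocalization.AtPrime.comap_maximalIdeal A p]
  exact IsLocalization.map_comap p.primeCompl A _

lemma span_loc_eq (n : ℕ) (M : Submodule R (Fin n → K)) (p : Ideal R) [hp : p.IsPrime]
    (A : Subalgebra R K) [IsLocalization.AtPrime A p] :
    (Submodule.span A (M : Set (Fin n → K)) : Set (Fin n → K))
      = {x | ∃ s : R, s ∉ p ∧ s • x ∈ M} := by
  have hinj : Function.Injective (algebraMap R K) := IsFractionRing.injective R K
  ext x
  simp only [SetLike.mem_coe, Set.mem_setOf_eq]
  constructor
  · intro hx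
    induction hx using Submodule.span_induction with
    | mem w hw => exact ⟨1, hp.ne_top ∘ (Ideal.eq_top_iff_one p).mpr, by simpa using hw⟩
    | zero => exact ⟨1, hp.ne_top ∘ (Ideal.eq_top_iff_one p).mpr, by simp⟩
    | add w₁ w₂ _ _ h1 h2 =>
      obtain ⟨s₁, hs₁, hm₁⟩ := h1
      obtain ⟨s₂, hs₂, hm₂⟩ := h2
      refine ⟨s₁ * s₂, fun hin => ((hp.mem_or_mem hin).elim hs₁ hs₂), ?_⟩
      rw [smul_add]
      refine M.add_mem ?_ ?_
      · rw [mul_comm, mul_smul]; exact M.smul_mem s₂ hm₁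
      · rw [mul_smul]; exact M.smul_mem s₁ hm₂
    | smul a w _ h1 =>
      obtain ⟨s, hs, hm⟩ := h1
      obtain ⟨s', hs', r, hr⟩ := (mem_loc_subalg_iff p A (a : K)).mp a.2
      refine ⟨s' * s, fun hin => ((hp.mem_or_mem hin).elim hs' hs), ?_⟩
      have hsmul : a • w = (a : K) • w := (algebraMap_smul K a w).symm
      have e1 : (s' * s) • a • w = (algebraMap R K (s' * s) * (a : K)) • w := by
        rw [hsmul, ← algebraMap_smul K (s' * s) ((a : K) • w), smul_smul]
      have e2 : r • (s • w) = (algebraMap R K r * algebraMap R K s) • w := by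
        rw [← algebraMap_smul K s w, ← algebraMap_smul K r _, smul_smul]
      have : (s' * s) • a • w = r • (s • w) := by
        rw [e1, e2]
        congr 1
        rw [map_mul]
        linear_combination (algebraMap R K s) * hr
      rw [this]
      exact M.smul_mem r hm
  · rintro ⟨s, hs, hm⟩
    have hs0 : algebraMap R K s ≠ 0 := by
      simp only [ne_eq, map_eq_zero_iff _ hinj]
      rintro rfl; exact hs p.zero_mem
    have hsinv : (algebraMap R K s)⁻¹ ∈ A := by
      rw [mem_loc_subalg_iff p A]
      exact ⟨s, hs, 1, by field_simp; simp⟩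
    have : x = (⟨_, hsinv⟩ : A) • (s • x) := by
      rw [← algebraMap_smul K (⟨_, hsinv⟩ : A) (s • x), ← algebraMap_smul K s x]
      have : algebraMap A K (⟨_, hsinv⟩ : A) = (algebraMap R K s)⁻¹ := rfl
      rw [this, smul_smul, inv_mul_cancel₀ hs0, one_smul]
    rw [this]
    exact Submodule.smul_mem _ _ (Submodule.subset_span hm)

lemma ddual_subset_span [IsNoetherianRing R] [IsIntegrallyClosed R] (n : ℕ)
    (M : Submodule R (Fin n → K)) (hM : IsLattice n M) (p : Ideal R) [hp : p.IsPrime]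
    (hmin : ∀ q : Ideal R, q.IsPrime → q < p → q = ⊥)
    (A : Subalgebra R K) [IsLocalization.AtPrime A p] :
    DDual (R := R) n (M : Set (Fin n → K)) ⊆ {x | ∃ s : R, s ∉ p ∧ s • x ∈ M} := by
  classical
  haveI : IsNoetherianRing A := IsLocalization.isNoetherianRing p.primeCompl A ‹_›
  haveI : IsFractionRing A K :=
    IsFractionRing.isFractionRing_of_isDomain_of_isLocalization p.primeCompl A K
  haveI pid : IsPrincipalIdealRing A := loc_isPID p hmin A
  haveI : Module.IsTorsionFree A K :=
    Module.isTorsionFree_iff_algebraMap_injective.mpr (IsFractionRing.injective A K)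
  set MA := Submodule.span A (M : Set (Fin n → K)) with hMAdef
  have hfg : MA.FG := by
    obtain ⟨T, hT⟩ := hM.1
    refine ⟨T, ?_⟩
    rw [hMAdef, ← hT]
    exact (Submodule.span_span_of_tower R A (↑T : Set (Fin n → K))).symm ▸ rfl
  haveI : Module.Finite A MA := Module.Finite.iff_fg.mpr hfg
  haveI : Module.Free A MA := Module.free_of_finite_type_torsion_free'
  set ι := Module.Free.ChooseBasisIndex A ↥MA with hι
  set b : Module.Basis ι A ↥MA := Module.Free.chooseBasis A ↥MA with hb
  set v : ι → (Fin n → K) := fun i => (b i : Fin n → K) with hv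
  have hliA : LinearIndependent A v :=
    b.linearIndependent.map' MA.subtype (Submodule.ker_subtype MA)
  have hliK : LinearIndependent K v :=
    (LinearIndependent.iff_fractionRing (R := A) (K := K)).mp hliA
  have hspanA : Submodule.span A (Set.range v) = MA := by
    have : Set.range v = MA.subtype '' (Set.range b) := by
      ext w; simp [hv, Set.range_comp]
    rw [this, Submodule.span_image, Module.Basis.span_eq, Submodule.map_top, Submodule.range_subtype]
  have hspanK : ⊤ ≤ Submodule.span K (Set.range v) := by
    rw [← hM.2]
    refine Submodule.span_le.mpr ?_
    intro m hm
    have h1 : m ∈ MA := Submodule.subset_span hm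
    rw [← hspanA] at h1
    exact Submodule.span_subset_span A K _ h1
  set c : Module.Basis ι K (Fin n → K) := Module.Basis.mk hliK hspanK with hc
  have hrepr : ∀ x ∈ MA, ∀ i, c.repr x i ∈ A := by
    intro x hx
    rw [← hspanA] at hx
    induction hx using Submodule.span_induction with
    | mem w hw =>
      intro i
      obtain ⟨j, rfl⟩ := hw
      have : c.repr (v j) = Finsupp.single j 1 := by
        rw [show v j = c j from (Module.Basis.mk_apply hliK hspanK j).symm, Module.Basis.repr_self]
      rw [this, Finsupp.single_apply]
      split
      · exact A.one_mem
      · exact A.zero_mem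
    | zero => intro i; rw [map_zero]; exact A.zero_mem
    | add w₁ w₂ _ _ h1 h2 =>
      intro i
      rw [map_add, Finsupp.add_apply]
      exact A.add_mem (h1 i) (h2 i)
    | smul a w _ ih =>
      intro i
      rw [show a • w = (a : K) • w from (algebraMap_smul K a w).symm, map_smul,
        Finsupp.smul_apply, smul_eq_mul]
      exact A.mul_mem a.2 (ih i)
  obtain ⟨T, hT⟩ := hM.1
  have hcd : ∀ i : ι, ∃ s : R, s ∉ p ∧ ∀ m ∈ M, ∃ r : R,
      algebraMap R K s * c.repr m i = algebraMap R K r := by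
    intro i
    have hchoice : ∀ t : T, ∃ s : R, s ∉ p ∧ ∃ r : R,
        algebraMap R K s * c.repr (t : Fin n → K) i = algebraMap R K r := by
      intro t
      have htM : (t : Fin n → K) ∈ M := by
        rw [← hT]; exact Submodule.subset_span t.2
      exact (mem_loc_subalg_iff p A _).mp (hrepr _ (Submodule.subset_span htM) i)
    choose sfun hs1 hs2 using hchoice
    refine ⟨∏ t : T, sfun t, ?_, ?_⟩
    · exact p.primeCompl.prod_mem fun t _ => hs1 t
    · intro m hm
      rw [← hT] at hm
      induction hm using Submodule.span_induction with
      | mem w hw =>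
        obtain ⟨r, hr⟩ := hs2 ⟨w, hw⟩
        have hprod := Finset.mul_prod_erase Finset.univ sfun (Finset.mem_univ ⟨w, hw⟩)
        have hr' : algebraMap R K (sfun ⟨w, hw⟩) * (c.repr w) i = algebraMap R K r := hr
        refine ⟨(∏ t ∈ Finset.univ.erase (⟨w, hw⟩ : T), sfun t) * r, ?_⟩
        rw [← hprod, map_mul, map_mul]
        linear_combination (algebraMap R K (∏ t ∈ Finset.univ.erase (⟨w, hw⟩ : T), sfun t)) * hr'
      | zero => exact ⟨0, by simp⟩
      | add w₁ w₂ _ _ h1 h2 =>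
        obtain ⟨r₁, hr₁⟩ := h1
        obtain ⟨r₂, hr₂⟩ := h2
        exact ⟨r₁ + r₂, by rw [map_add, Finsupp.add_apply, mul_add, hr₁, hr₂, map_add]⟩
      | smul a w _ ih =>
        obtain ⟨r, hr⟩ := ih
        refine ⟨a * r, ?_⟩
        rw [show (a : R) • w = algebraMap R K a • w from (algebraMap_smul K a w).symm, map_smul,
          Finsupp.smul_apply, smul_eq_mul, map_mul]
        rw [mul_comm (algebraMap R K a) _, ← mul_assoc, hr, mul_comm]
  intro x hx
  choose sfun hsp hsf using hcd
  have hxrep : ∀ i, c.repr x i ∈ A := by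
    intro i
    set f : (Fin n → K) →ₗ[K] K := algebraMap R K (sfun i) • c.coord i with hf
    have hfd : f ∈ DualLat (R := R) n (M : Set (Fin n → K)) := by
      intro m hm
      obtain ⟨r, hr⟩ := hsf i m hm
      refine ⟨r, ?_⟩
      rw [hf, LinearMap.smul_apply, Module.Basis.coord_apply, smul_eq_mul]
      exact hr
    obtain ⟨r, hr⟩ := hx f hfd
    rw [hf, LinearMap.smul_apply, Module.Basis.coord_apply, smul_eq_mul] at hr
    rw [mem_loc_subalg_iff p A]
    exact ⟨sfun i, hsp i, r, hr⟩
  have hxMA : x ∈ MA := by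
    have hsum := Module.Basis.sum_repr c x
    rw [← hsum]
    refine Submodule.sum_mem _ fun i _ => ?_
    have heq : c.repr x i • c i = (⟨c.repr x i, hxrep i⟩ : A) • (c i) :=
      (algebraMap_smul K (⟨c.repr x i, hxrep i⟩ : A) (c i)).symm
    rw [heq]
    refine Submodule.smul_mem _ _ ?_
    rw [← hspanA]
    exact Submodule.subset_span ⟨i, (Module.Basis.mk_apply hliK hspanK i).symm⟩
  have := span_loc_eq n M p A
  rw [← hMAdef] at this
  rw [Set.ext_iff] at this
  exact (this x).mp hxMA

end Aux

/-- let `R` be a noetherian integrally closed domain with fraction field `K`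
and `P` its set of height-one primes.  For any `R`-lattice `M` in `W = K^n`, the double dual
`M^{**}` equals `∩_{𝔭 ∈ P} M_𝔭`; consequently `M^{**}` is reflexive, and `M` is reflexive
(i.e. `M = M^{**}`) if and only if `M = ∩_{𝔭 ∈ P} M_𝔭`. -/
theorem double_dual_eq_inter_localizations (R K : Type) [CommRing R] [IsDomain R]
    [IsNoetherianRing R] [IsIntegrallyClosed R] [Field K] [Algebra R K] [IsFractionRing R K]
    (n : ℕ) (M : Submodule R (Fin n → K)) (hM : IsLattice n M) :
    DDual (R := R) n (M : Set (Fin n → K))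
        = ⋂ p : HtOnePrime R, LocAt n p (M : Set (Fin n → K)) ∧
    DDual (R := R) n (DDual (R := R) n (M : Set (Fin n → K)))
        = DDual (R := R) n (M : Set (Fin n → K)) ∧
    ((M : Set (Fin n → K)) = DDual (R := R) n (M : Set (Fin n → K)) ↔
      (M : Set (Fin n → K)) = ⋂ p : HtOnePrime R, LocAt n p (M : Set (Fin n → K))) := by
  classical
  have h1 : DDual (R := R) n (M : Set (Fin n → K))
      = ⋂ p : HtOnePrime R, LocAt n p (M : Set (Fin n → K)) := by
    apply Set.Subset.antisymm
    · intro x hx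
      refine Set.mem_iInter.mpr fun p => ?_
      haveI := p.2.1
      exact ddual_subset_span n M hM p.1 p.2.2.2
        (Localization.subalgebra.ofField K p.1.primeCompl p.1.primeCompl_le_nonZeroDivisors) hx
    · intro x hx f hf
      refine mem_range_of_forall_htOne (f x) fun p => ?_
      obtain ⟨s, hs, hm⟩ := Set.mem_iInter.mp hx p
      obtain ⟨r, hr⟩ := hf _ hm
      have hsm : s • x = algebraMap R K s • x := (algebraMap_smul K s x).symm
      rw [hsm, map_smul, smul_eq_mul] at hr
      exact ⟨s, hs, r, hr⟩
  have hsub : DualLat (R := R) n (M : Set (Fin n → K))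
      ⊆ DualLat (R := R) n (DDual (R := R) n (M : Set (Fin n → K))) := by
    intro f hf x hx
    exact hx f hf
  refine ⟨h1, ?_, by rw [h1]⟩
  apply Set.Subset.antisymm
  · intro x hx f hf
    exact hx f (hsub hf)
  · intro x hx f hf
    exact hf x hx
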